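/- For any smooth (C¹) vector field w : ℝ² → ℝ², div Σ₁(w) = -2 w₁ w₂ div w + (∂₁w₂ + ∂₂w₁)(1 - |w|²) pointwise. -/

import Mathlib

noncomputable section
open Real

/-- The first Jin-Kohn entropy. -/
def JKS1 (v : ℝ × ℝ) : ℝ × ℝ :=
  (v.2 * (1 - v.1 ^ 2 - v.2 ^ 2 / 3), v.1 * (1 - v.2 ^ 2 - v.1 ^ 2 / 3))

/-- The second Jin-Kohn entropy. -/
def JKS2 (v : ℝ × ℝ) : ℝ × ℝ :=
  (-v.1 * (1 - 2 * v.1 ^ 2 / 3), v.2 * (1 - 2 * v.2 ^ 2 / 3))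

/-- Partial derivative in the first coordinate direction. -/
def pd1 (f : ℝ × ℝ → ℝ) (x : ℝ × ℝ) : ℝ := fderiv ℝ f x (1, 0)

/-- Partial derivative in the second coordinate direction. -/
def pd2 (f : ℝ × ℝ → ℝ) (x : ℝ × ℝ) : ℝ := fderiv ℝ f x (0, 1)

lemma key (f g : ℝ × ℝ → ℝ) (x v : ℝ × ℝ) (hf : DifferentiableAt ℝ f x)
    (hg : DifferentiableAt ℝ g x) :
    fderiv ℝ (fun y => g y * (1 - f y ^ 2 - g y ^ 2 / 3)) x v
      = fderiv ℝ g x v * (1 - f x ^ 2 - g x ^ 2 / 3)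
        + g x * (-(2 * f x * fderiv ℝ f x v) - 2 * g x * fderiv ℝ g x v / 3) := by
  have Hf := hf.hasFDerivAt
  have Hg := hg.hasFDerivAt
  have H := (Hg.mul (((hasFDerivAt_const (1:ℝ) x).sub (Hf.mul Hf)).sub
      ((Hg.mul Hg).mul_const (3:ℝ)⁻¹))).fderiv
  simp only [pow_two, div_eq_mul_inv]
  rw [show (fun y => g y * (1 - f y * f y - g y * g y * 3⁻¹)) = g * ((fun x => 1) - f * f - fun y => (g * g) y * 3⁻¹) from rfl, H]
  simp
  ring

theorem stmt2 (w : ℝ × ℝ → ℝ × ℝ) (hw : ContDiff ℝ 1 w) (x : ℝ × ℝ) :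
    pd1 (fun y => (JKS1 (w y)).1) x + pd2 (fun y => (JKS1 (w y)).2) x
      = -2 * (w x).1 * (w x).2
          * (pd1 (fun y => (w y).1) x + pd2 (fun y => (w y).2) x)
        + (pd1 (fun y => (w y).2) x + pd2 (fun y => (w y).1) x)
          * (1 - ((w x).1 ^ 2 + (w x).2 ^ 2)) := by
  have hd : DifferentiableAt ℝ w x := hw.differentiable one_ne_zero x
  have h1 : DifferentiableAt ℝ (fun y => (w y).1) x := hd.fst
  have h2 : DifferentiableAt ℝ (fun y => (w y).2) x := hd.snd
  simp only [JKS1, pd1, pd2]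
  rw [key (fun y => (w y).1) (fun y => (w y).2) x (1,0) h1 h2,
      key (fun y => (w y).2) (fun y => (w y).1) x (0,1) h2 h1]
  ring
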